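/- Let φ be a flow on a locally compact metric space M and let (N, L) be a regular index pair for an isolated invariant set I, with exit time map τ₊ : N → [0,∞]. Then U := τ₊⁻¹([0,1]) is a neighborhood of L in N, and the map H : U × [0,1] → U defined by H(x,s) = φ(min{s, τ₊(x)}, x) is a strong deformation retraction of U onto L: H is continuous, H(x,0) = x for all x ∈ U, H(x,1) ∈ L for all x ∈ U, and H(x,s) = x for all x ∈ L and s ∈ [0,1]. In particular, L is a neighborhood deformation retract in N. -/

import Mathlib

open Set
open scoped Classical ENNReal

/-- The exit time map `τ₊ : N → [0,∞]` of an index pair `(N, L)` for the flow `φ`: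
`τ₊(x) = sup { t ≥ 0 : φ([0,t] × {x}) ⊆ N ∖ L }` for `x ∈ N ∖ L`, and `τ₊(x) = 0`
for `x ∈ L`. -/
noncomputable def exitTime {M : Type*} [TopologicalSpace M]
    (φ : ℝ → M → M) (N L : Set M) (x : M) : ℝ≥0∞ :=
  if x ∈ L then 0
  else sSup {τ : ℝ≥0∞ | ∃ t : ℝ, 0 ≤ t ∧ τ = ENNReal.ofReal t ∧
    ∀ s : ℝ, s ∈ Set.Icc 0 t → φ s x ∈ N \ L}

open Filter Topology

section Aux
variable {M : Type*} [MetricSpace M] {φ : ℝ → M → M} {N L : Set M}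

lemma exitTime_of_memL {x : M} (hx : x ∈ L) : exitTime φ N L x = 0 := if_pos hx

lemma le_exitTime {x : M} (hx : x ∉ L) {t : ℝ} (ht : 0 ≤ t)
    (h : ∀ s ∈ Set.Icc 0 t, φ s x ∈ N \ L) :
    ENNReal.ofReal t ≤ exitTime φ N L x := by
  rw [exitTime, if_neg hx]
  exact le_sSup ⟨t, ht, rfl, h⟩

lemma stay_of_lt_exitTime {x : M} (hx : x ∉ L) {t : ℝ}
    (h : ENNReal.ofReal t < exitTime φ N L x) :
    ∀ s ∈ Set.Icc 0 t, φ s x ∈ N \ L := by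
  rw [exitTime, if_neg hx] at h
  obtain ⟨b, hb, hlt⟩ := lt_sSup_iff.mp h
  obtain ⟨t', ht', rfl, hstay⟩ := hb
  have htt' : t ≤ t' := by
    by_contra hle
    push_neg at hle
    exact absurd (ENNReal.ofReal_le_ofReal hle.le) (not_le.mpr hlt)
  exact fun s hs => hstay s ⟨hs.1, hs.2.trans htt'⟩

lemma exitTime_stayN (hφ_cont : Continuous fun p : ℝ × M => φ p.1 p.2)
    (hφ_zero : ∀ x, φ 0 x = x) (hN_closed : IsClosed N)
    {x : M} (hxN : x ∈ N) {t : ℝ} (ht : 0 ≤ t)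
    (hle : ENNReal.ofReal t ≤ exitTime φ N L x) : φ t x ∈ N := by
  by_cases hxL : x ∈ L
  · have h0 : t = 0 := by
      rw [exitTime_of_memL hxL, nonpos_iff_eq_zero, ENNReal.ofReal_eq_zero] at hle
      exact le_antisymm hle ht
    rw [h0, hφ_zero]; exact hxN
  rcases hle.lt_or_eq with hlt | heq
  · exact (stay_of_lt_exitTime hxL hlt t ⟨ht, le_refl t⟩).1
  rcases ht.lt_or_eq with ht0 | ht0
  · -- t > 0 : limit from the left
    have hcφ : Continuous fun s : ℝ => φ s x :=
      hφ_cont.comp (continuous_id.prodMk continuous_const)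
    have hcont : Tendsto (fun s : ℝ => φ s x) (𝓝[<] t) (𝓝 (φ t x)) :=
      (hcφ.tendsto t).mono_left nhdsWithin_le_nhds
    have hev : ∀ᶠ s in 𝓝[<] t, φ s x ∈ N := by
      filter_upwards [Ioo_mem_nhdsLT_of_mem (⟨ht0, le_refl t⟩ : t ∈ Set.Ioc 0 t)] with s hs
      have : ENNReal.ofReal s < exitTime φ N L x := by
        rw [← heq]
        exact (ENNReal.ofReal_lt_ofReal_iff ht0).mpr hs.2
      exact (stay_of_lt_exitTime hxL this s ⟨hs.1.le, le_refl s⟩).1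
    exact hN_closed.mem_of_tendsto hcont hev
  · rw [← ht0, hφ_zero]; exact hxN

lemma exitTime_hitL (hφ_cont : Continuous fun p : ℝ × M => φ p.1 p.2)
    (hφ_zero : ∀ x, φ 0 x = x) (hL_closed : IsClosed L)
    (h_exit : ∀ x ∈ N, ∀ t : ℝ, 0 ≤ t → φ t x ∉ N → ∃ t' ∈ Set.Icc 0 t, φ t' x ∈ L)
    {x : M} (hxN : x ∈ N) (hfin : exitTime φ N L x ≠ ⊤) :
    φ (exitTime φ N L x).toReal x ∈ L := by
  by_cases hxL : x ∈ L
  · rw [exitTime_of_memL hxL]; simpa [hφ_zero] using hxL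
  set a := (exitTime φ N L x).toReal with ha
  have ha0 : 0 ≤ a := ENNReal.toReal_nonneg
  have hofa : ENNReal.ofReal a = exitTime φ N L x := ENNReal.ofReal_toReal hfin
  have hstay : ∀ s : ℝ, 0 ≤ s → s < a → φ s x ∈ N \ L := by
    intro s hs0 hsa
    have : ENNReal.ofReal s < exitTime φ N L x := by
      rw [← hofa]
      exact (ENNReal.ofReal_lt_ofReal_iff (hs0.trans_lt hsa)).mpr hsa
    exact stay_of_lt_exitTime hxL this s ⟨hs0, le_refl s⟩
  have key : ∀ n : ℕ, ∃ s : ℝ, a ≤ s ∧ s ≤ a + 1 / (n + 1) ∧ φ s x ∈ L := by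
    intro n
    have hε : (0:ℝ) < 1 / (n + 1) := by positivity
    have hnot : ¬ ∀ s ∈ Set.Icc 0 (a + 1 / (n + 1)), φ s x ∈ N \ L := by
      intro hall
      have := le_exitTime hxL (by linarith) hall
      rw [← hofa] at this
      have := (ENNReal.ofReal_le_ofReal_iff ha0).mp this
      linarith
    push_neg at hnot
    obtain ⟨s, hs, hsout⟩ := hnot
    rw [Set.mem_diff, not_and_or, not_not] at hsout
    rcases hsout with hsN | hsL
    · obtain ⟨t', ht', ht'L⟩ := h_exit x hxN s hs.1 hsN
      refine ⟨t', ?_, ht'.2.trans hs.2, ht'L⟩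
      by_contra hlt
      push_neg at hlt
      exact (hstay t' ht'.1 hlt).2 ht'L
    · refine ⟨s, ?_, hs.2, hsL⟩
      by_contra hlt
      push_neg at hlt
      exact (hstay s hs.1 hlt).2 hsL
  choose f hf1 hf2 hf3 using key
  have htend : Tendsto f atTop (𝓝 a) := by
    have h2 : Tendsto (fun n : ℕ => a + 1 / ((n:ℝ) + 1)) atTop (𝓝 a) := by
      have h := Tendsto.add (tendsto_const_nhds (x := a) (f := atTop))
        tendsto_one_div_add_atTop_nhds_zero_nat
      simpa using h
    exact tendsto_of_tendsto_of_tendsto_of_le_of_le tendsto_const_nhds h2 hf1 hf2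
  have hcφ : Continuous fun s : ℝ => φ s x :=
    hφ_cont.comp (continuous_id.prodMk continuous_const)
  have : Tendsto (fun n => φ (f n) x) atTop (𝓝 (φ a x)) :=
    (hcφ.tendsto a).comp htend
  exact hL_closed.mem_of_tendsto this (Eventually.of_forall hf3)

lemma exitTime_flow_le (hφ_cont : Continuous fun p : ℝ × M => φ p.1 p.2)
    (hφ_zero : ∀ x, φ 0 x = x) (hφ_add : ∀ t s x, φ t (φ s x) = φ (t + s) x)
    (hL_closed : IsClosed L)
    (h_exit : ∀ x ∈ N, ∀ t : ℝ, 0 ≤ t → φ t x ∉ N → ∃ t' ∈ Set.Icc 0 t, φ t' x ∈ L)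
    {x : M} (hxN : x ∈ N) (hfin : exitTime φ N L x ≠ ⊤) {t : ℝ} (ht : 0 ≤ t)
    (hle : ENNReal.ofReal t ≤ exitTime φ N L x) :
    exitTime φ N L (φ t x) ≤ exitTime φ N L x := by
  by_cases hyL : φ t x ∈ L
  · rw [exitTime_of_memL hyL]; exact zero_le
  set a := (exitTime φ N L x).toReal with ha
  have ha0 : 0 ≤ a := ENNReal.toReal_nonneg
  have hofa : ENNReal.ofReal a = exitTime φ N L x := ENNReal.ofReal_toReal hfin
  have hta : t ≤ a := by
    rw [← hofa] at hle
    exact (ENNReal.ofReal_le_ofReal_iff ha0).mp hle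
  have hhit : φ a x ∈ L := exitTime_hitL hφ_cont hφ_zero hL_closed h_exit hxN hfin
  have : exitTime φ N L (φ t x) ≤ ENNReal.ofReal (a - t) := by
    by_contra hlt
    push_neg at hlt
    have := stay_of_lt_exitTime hyL hlt (a - t) ⟨by linarith, le_refl _⟩
    rw [hφ_add] at this
    have h2 : a - t + t = a := by ring
    rw [h2] at this
    exact this.2 hhit
  calc exitTime φ N L (φ t x) ≤ ENNReal.ofReal (a - t) := this
    _ ≤ ENNReal.ofReal a := ENNReal.ofReal_le_ofReal (by linarith)
    _ = exitTime φ N L x := hofa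

end Aux

/-- Let `φ` be a flow on a locally compact metric space `M` and let `(N, L)` be a
regular index pair for an isolated invariant set `I`, with exit time map
`τ₊ : N → [0,∞]`.  Then `U := τ₊⁻¹([0,1])` is a neighborhood of `L` in `N`, and the
map `H : U × [0,1] → U` defined by `H(x,s) = φ(min{s, τ₊(x)}, x)` is a strong
deformation retraction of `U` onto `L`: `H` is continuous, `H(x,0) = x` for all
`x ∈ U`, `H(x,1) ∈ L` for all `x ∈ U`, and `H(x,s) = x` for all `x ∈ L`, `s ∈ [0,1]`.
In particular, `L` is a neighborhood deformation retract in `N`. -/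

theorem exit_set_neighborhood_deformation_retract
    {M : Type*} [MetricSpace M] [LocallyCompactSpace M]
    (φ : ℝ → M → M)
    (hφ_cont : Continuous fun p : ℝ × M => φ p.1 p.2)
    (hφ_zero : ∀ x, φ 0 x = x)
    (hφ_add : ∀ t s x, φ t (φ s x) = φ (t + s) x)
    (I N L : Set M)
    -- `(N, L)` is a pair of closed sets with `L ⊆ N`
    (hN_closed : IsClosed N) (hL_closed : IsClosed L) (hLN : L ⊆ N)
    -- `I` is an invariant set and `closure (N ∖ L)` is an isolating neighborhood for `I`
    (hI_inv : ∀ t : ℝ, φ t '' I ⊆ I)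
    (h_iso_cpt : IsCompact (closure (N \ L)))
    (h_iso_int : I ⊆ interior (closure (N \ L)))
    (h_iso_max : ∀ S : Set M, (∀ t : ℝ, φ t '' S ⊆ S) → S ⊆ closure (N \ L) → S ⊆ I)
    -- `L` is positively invariant relative to `N`
    (h_posInv : ∀ x ∈ L, ∀ t : ℝ, 0 ≤ t →
      (∀ s ∈ Set.Icc 0 t, φ s x ∈ N) → ∀ s ∈ Set.Icc 0 t, φ s x ∈ L)
    -- `L` is the exit set of `N`
    (h_exit : ∀ x ∈ N, ∀ t : ℝ, 0 ≤ t → φ t x ∉ N → ∃ t' ∈ Set.Icc 0 t, φ t' x ∈ L)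
    -- the index pair is regular: the exit time map is continuous on `N`
    (h_reg : ContinuousOn (exitTime φ N L) N)
    (U : Set M) (hU : U = {x ∈ N | exitTime φ N L x ≤ 1})
    (H : M → ℝ → M)
    (hH : ∀ x s, H x s = φ (min (ENNReal.ofReal s) (exitTime φ N L x)).toReal x) :
    -- `U` is a neighborhood of `L` in `N`
    (L ⊆ U) ∧ (∀ x ∈ L, U ∈ nhdsWithin x N) ∧
    -- `H` maps `U × [0,1]` into `U` and is continuous there
    (∀ x ∈ U, ∀ s ∈ Set.Icc (0 : ℝ) 1, H x s ∈ U) ∧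
    ContinuousOn (fun p : M × ℝ => H p.1 p.2) (U ×ˢ Set.Icc (0 : ℝ) 1) ∧
    -- `H` is a strong deformation retraction of `U` onto `L`
    (∀ x ∈ U, H x 0 = x) ∧
    (∀ x ∈ U, H x 1 ∈ L) ∧
    (∀ x ∈ L, ∀ s ∈ Set.Icc (0 : ℝ) 1, H x s = x) := by
  subst hU
  have hτcont := h_reg
  set τ := exitTime φ N L with hτ
  have hUN : {x | x ∈ N ∧ τ x ≤ 1} ⊆ N := fun x hx => hx.1
  have hLU : L ⊆ {x | x ∈ N ∧ τ x ≤ 1} := by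
    intro x hx
    exact ⟨hLN hx, by rw [hτ, exitTime_of_memL hx]; exact zero_le⟩
  refine ⟨hLU, ?_, ?_, ?_, ?_, ?_, ?_⟩
  · -- neighborhood of L in N
    intro x hxL
    have hx0 : τ x = 0 := exitTime_of_memL hxL
    have hcw : ContinuousWithinAt τ N x := hτcont x (hLN hxL)
    have hmem : Set.Iic (1 : ℝ≥0∞) ∈ nhds (τ x) := by
      rw [hx0]
      exact Filter.mem_of_superset (IsOpen.mem_nhds isOpen_Iio (Set.mem_Iio.mpr zero_lt_one))
        Set.Iio_subset_Iic_self
    have hpre : τ ⁻¹' Set.Iic 1 ∈ nhdsWithin x N :=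
      hcw.preimage_mem_nhdsWithin hmem
    refine Filter.mem_of_superset (Filter.inter_mem self_mem_nhdsWithin hpre) ?_
    intro y hy
    exact ⟨hy.1, hy.2⟩
  · -- H maps U × [0,1] into U
    intro x hx s hs
    obtain ⟨hxN, hxτ⟩ := hx
    have hfin : τ x ≠ ⊤ := (hxτ.trans_lt ENNReal.one_lt_top).ne
    set m := min (ENNReal.ofReal s) (τ x) with hm
    have hmne : m ≠ ⊤ := ((min_le_left _ _).trans_lt ENNReal.ofReal_lt_top).ne
    set t := m.toReal with htdef
    have ht0 : 0 ≤ t := ENNReal.toReal_nonneg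
    have hoft : ENNReal.ofReal t = m := ENNReal.ofReal_toReal hmne
    have hle : ENNReal.ofReal t ≤ τ x := hoft ▸ min_le_right _ _
    have h1 : φ t x ∈ N := exitTime_stayN hφ_cont hφ_zero hN_closed hxN ht0 hle
    have h2 : τ (φ t x) ≤ τ x :=
      exitTime_flow_le hφ_cont hφ_zero hφ_add hL_closed h_exit hxN hfin ht0 hle
    rw [hH]
    exact ⟨h1, h2.trans hxτ⟩
  · -- continuity
    have hg : ContinuousOn
        (fun p : M × ℝ => (min (ENNReal.ofReal p.2) (τ p.1)).toReal)
        ({x | x ∈ N ∧ τ x ≤ 1} ×ˢ Set.Icc (0:ℝ) 1) := by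
      have h1 : ContinuousOn (fun p : M × ℝ => ENNReal.ofReal p.2)
          ({x | x ∈ N ∧ τ x ≤ 1} ×ˢ Set.Icc (0:ℝ) 1) :=
        (ENNReal.continuous_ofReal.comp continuous_snd).continuousOn
      have h2 : ContinuousOn (fun p : M × ℝ => τ p.1)
          ({x | x ∈ N ∧ τ x ≤ 1} ×ˢ Set.Icc (0:ℝ) 1) :=
        hτcont.comp continuousOn_fst fun p hp => hp.1.1
      have hmin : ContinuousOn (fun p : M × ℝ => min (ENNReal.ofReal p.2) (τ p.1))
          ({x | x ∈ N ∧ τ x ≤ 1} ×ˢ Set.Icc (0:ℝ) 1) := h1.inf h2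
      refine ENNReal.continuousOn_toReal.comp hmin ?_
      intro p _
      exact ((min_le_left _ _).trans_lt ENNReal.ofReal_lt_top).ne
    have hcont : ContinuousOn
        (fun p : M × ℝ => φ ((min (ENNReal.ofReal p.2) (τ p.1)).toReal) p.1)
        ({x | x ∈ N ∧ τ x ≤ 1} ×ˢ Set.Icc (0:ℝ) 1) :=
      hφ_cont.comp_continuousOn (hg.prodMk continuousOn_fst)
    exact hcont.congr fun p _ => hH p.1 p.2
  · -- H x 0 = x
    intro x _
    rw [hH, ENNReal.ofReal_zero, min_eq_left zero_le, ENNReal.toReal_zero, hφ_zero]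
  · -- H x 1 ∈ L
    intro x hx
    obtain ⟨hxN, hxτ⟩ := hx
    have hfin : τ x ≠ ⊤ := (hxτ.trans_lt ENNReal.one_lt_top).ne
    rw [hH, ENNReal.ofReal_one, min_eq_right hxτ]
    exact exitTime_hitL hφ_cont hφ_zero hL_closed h_exit hxN hfin
  · -- H fixes L
    intro x hxL s _
    have h0 : τ x = 0 := exitTime_of_memL hxL
    rw [hH, h0, min_eq_right zero_le, ENNReal.toReal_zero, hφ_zero]
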